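/- Suppose Assumptions [A1] and [A2] hold and suppose c > 0 is a constant such that ⟨Φ(y), y − θ⟩ ≥ c·‖y − θ‖² for all y ∈ K. Then with M := 8·(r*)² + 8·r²·E[W²], for every n ≥ 1, E[‖θ̂_{n+1} − θ‖²] ≤ (1 − 2c·γ_n + 8·γ_n²)·E[‖θ̂_n − θ‖²] + M·γ_n². -/

import Mathlib

open MeasureTheory ProbabilityTheory Filter
open scoped ENNReal NNReal RealInnerProductSpace Topology

noncomputable section

/-- The sample space `ℝ^d`. -/
abbrev Vec (d : ℕ) := EuclideanSpace ℝ (Fin d)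

/-- The parameter space `ℝ^d × ℝ`, equipped with the euclidean (`L²`) norm. -/
abbrev Par (d : ℕ) := WithLp 2 (EuclideanSpace ℝ (Fin d) × ℝ)

/-- Build an element of the parameter space from a center and a radius. -/
def pmk {d : ℕ} (z : Vec d) (a : ℝ) : Par d :=
  (WithLp.equiv 2 (EuclideanSpace ℝ (Fin d) × ℝ)).symm (z, a)

/-- First (center) component of a parameter. -/
def pz {d : ℕ} (y : Par d) : Vec d := (WithLp.equiv 2 (EuclideanSpace ℝ (Fin d) × ℝ) y).1

/-- Second (radius) component of a parameter. -/
def pa {d : ℕ} (y : Par d) : ℝ := (WithLp.equiv 2 (EuclideanSpace ℝ (Fin d) × ℝ) y).2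

/-- `Hgrad x y` is the gradient in `y = (z, a)` of `g(x,y) = (‖x - z‖ - a)²/2`, i.e.
`(z - x - a (z-x)/‖z-x‖, a - ‖z-x‖)`. -/
def Hgrad {d : ℕ} (x : Vec d) (y : Par d) : Par d :=
  pmk (pz y - x - pa y • (‖pz y - x‖⁻¹ • (pz y - x))) (pa y - ‖pz y - x‖)

/-- `Phi P X y = E[Hgrad (X) y]`, the gradient of `G(y) = E[(‖X-z‖-a)²]/2`. -/
def Phi {Ω : Type*} [MeasurableSpace Ω] {d : ℕ} (P : Measure Ω) (X : Ω → Vec d)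
    (y : Par d) : Par d :=
  ∫ ω, Hgrad (X ω) y ∂P

/-- Quadratic form `v ↦ vᵀ Γ(z) v` of the matrix
`Γ(z) = E[(1/‖X-z‖)(I_d - (X-z)(X-z)ᵀ/‖X-z‖²)]`. -/
def GammaQF {Ω : Type*} [MeasurableSpace Ω] {d : ℕ} (P : Measure Ω) (X : Ω → Vec d)
    (z v : Vec d) : ℝ :=
  ∫ ω, ‖X ω - z‖⁻¹ * (‖v‖ ^ 2 - ⟪X ω - z, v⟫ ^ 2 / ‖X ω - z‖ ^ 2) ∂P

/-- The Hessian matrix `Γ_y` of `G` at `y = (z, a)`, applied to a vector `y' = (z', a')`: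
`Γ_y = [[I_d - a E[(1/‖X-z‖)(I_d - (X-z)(X-z)ᵀ/‖X-z‖²)], E[(X-z)/‖X-z‖]], [E[(X-z)/‖X-z‖]ᵀ, 1]]`. -/
def GammaAt {Ω : Type*} [MeasurableSpace Ω] {d : ℕ} (P : Measure Ω) (X : Ω → Vec d)
    (y y' : Par d) : Par d :=
  pmk (pz y' - pa y • (∫ ω, ‖X ω - pz y‖⁻¹ •
          (pz y' - (⟪X ω - pz y, pz y'⟫ / ‖X ω - pz y‖ ^ 2) • (X ω - pz y)) ∂P)
        + pa y' • ∫ ω, ‖X ω - pz y‖⁻¹ • (X ω - pz y) ∂P)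
      (⟪∫ ω, ‖X ω - pz y‖⁻¹ • (X ω - pz y) ∂P, pz y'⟫ + pa y')

noncomputable instance parMS {d : ℕ} : MeasurableSpace (Par d) := borel _
instance parBorel {d : ℕ} : BorelSpace (Par d) := ⟨rfl⟩
set_option synthInstance.maxHeartbeats 1000000 in
instance parSC {d : ℕ} : SecondCountableTopology (Par d) :=
  inferInstanceAs (SecondCountableTopology (WithLp 2 (EuclideanSpace ℝ (Fin d) × ℝ)))

lemma continuous_pz {d : ℕ} : Continuous (pz (d := d)) :=
  ((WithLp.prodContinuousLinearEquiv 2 ℝ (Vec d) ℝ).continuous).fst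

lemma continuous_pa {d : ℕ} : Continuous (pa (d := d)) :=
  ((WithLp.prodContinuousLinearEquiv 2 ℝ (Vec d) ℝ).continuous).snd

lemma continuous_pmk {d : ℕ} : Continuous (fun q : Vec d × ℝ => pmk q.1 q.2) :=
  (WithLp.prodContinuousLinearEquiv 2 ℝ (Vec d) ℝ).symm.continuous

lemma norm_par_sq {d : ℕ} (y : Par d) : ‖y‖ ^ 2 = ‖pz y‖ ^ 2 + pa y ^ 2 := by
  simpa [pz, pa, Real.norm_eq_abs, sq_abs] using WithLp.prod_norm_sq_eq_of_L2 y

lemma pz_sub {d : ℕ} (u v : Par d) : pz (u - v) = pz u - pz v := rfl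
lemma pa_sub {d : ℕ} (u v : Par d) : pa (u - v) = pa u - pa v := rfl
lemma pz_pmk {d : ℕ} (z : Vec d) (a : ℝ) : pz (pmk z a) = z := rfl
lemma pa_pmk {d : ℕ} (z : Vec d) (a : ℝ) : pa (pmk z a) = a := rfl

lemma pz_norm_le {d : ℕ} (y : Par d) : ‖pz y‖ ≤ ‖y‖ := by
  nlinarith [norm_par_sq y, norm_nonneg y, norm_nonneg (pz y), sq_nonneg (pa y)]

lemma pa_abs_le {d : ℕ} (y : Par d) : |pa y| ≤ ‖y‖ := by
  nlinarith [norm_par_sq y, norm_nonneg y, abs_nonneg (pa y), sq_abs (pa y),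
    sq_nonneg (‖pz y‖)]

lemma measurable_Hgrad {d : ℕ} : Measurable (fun p : Vec d × Par d => Hgrad p.1 p.2) := by
  have hpz : Measurable (pz (d := d)) := continuous_pz.measurable
  have hpa : Measurable (pa (d := d)) := continuous_pa.measurable
  have hsub : Measurable (fun p : Vec d × Par d => pz p.2 - p.1) :=
    (hpz.comp measurable_snd).sub measurable_fst
  have hnrm : Measurable (fun p : Vec d × Par d => ‖pz p.2 - p.1‖) := hsub.norm
  have hs1 : Measurable (fun p : Vec d × Par d => ‖pz p.2 - p.1‖⁻¹ • (pz p.2 - p.1)) :=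
    hnrm.inv.smul hsub
  have hs2 : Measurable
      (fun p : Vec d × Par d => pa p.2 • (‖pz p.2 - p.1‖⁻¹ • (pz p.2 - p.1))) :=
    (hpa.comp measurable_snd).smul hs1
  have hA := hsub.sub hs2
  have hB := (hpa.comp measurable_snd).sub hnrm
  exact continuous_pmk.measurable.comp (hA.prodMk hB)

lemma Hgrad_norm_sq_le {d : ℕ} (x : Vec d) (y : Par d) :
    ‖Hgrad x y‖ ^ 2 ≤ 2 * (‖pz y - x‖ - pa y) ^ 2 := by
  have h1 : ‖Hgrad x y‖ ^ 2
      = ‖pz y - x - pa y • (‖pz y - x‖⁻¹ • (pz y - x))‖ ^ 2 + (pa y - ‖pz y - x‖) ^ 2 := by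
    rw [Hgrad, norm_par_sq, pz_pmk, pa_pmk]
  have h2 : ‖pz y - x - pa y • (‖pz y - x‖⁻¹ • (pz y - x))‖ ≤ |‖pz y - x‖ - pa y| := by
    rcases eq_or_ne (pz y - x) 0 with h | h
    · rw [h]
      simp
    · have ht : (0:ℝ) < ‖pz y - x‖ := norm_pos_iff.mpr h
      have he : pz y - x - pa y • (‖pz y - x‖⁻¹ • (pz y - x))
          = (1 - pa y * ‖pz y - x‖⁻¹) • (pz y - x) := by
        rw [sub_smul, one_smul, mul_smul]
      rw [he, norm_smul, Real.norm_eq_abs]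
      have h3 : |1 - pa y * ‖pz y - x‖⁻¹| * ‖pz y - x‖
          = |(1 - pa y * ‖pz y - x‖⁻¹) * ‖pz y - x‖| := by
        rw [abs_mul, abs_of_pos ht]
      rw [h3]
      have h4 : (1 - pa y * ‖pz y - x‖⁻¹) * ‖pz y - x‖ = ‖pz y - x‖ - pa y := by
        field_simp
      rw [h4]
  nlinarith [h2, norm_nonneg (pz y - x - pa y • (‖pz y - x‖⁻¹ • (pz y - x))),
    sq_abs (‖pz y - x‖ - pa y), abs_nonneg (‖pz y - x‖ - pa y)]

lemma Hgrad_bound {d : ℕ} (x : Vec d) (y : Par d) (μ : Vec d) (rstar : ℝ) :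
    ‖Hgrad x y‖ ^ 2 ≤ 8 * ‖y - pmk μ rstar‖ ^ 2 + 8 * rstar ^ 2 + 8 * ‖x - μ‖ ^ 2 := by
  have h := Hgrad_norm_sq_le x y
  have hy : ‖y - pmk μ rstar‖ ^ 2 = ‖pz y - μ‖ ^ 2 + (pa y - rstar) ^ 2 := by
    rw [norm_par_sq, pz_sub, pa_sub, pz_pmk, pa_pmk]
  have htri : |‖pz y - x‖ - ‖μ - x‖| ≤ ‖pz y - μ‖ := by
    simpa [sub_sub_sub_cancel_right] using abs_norm_sub_norm_le (pz y - x) (μ - x)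
  have hmx : ‖μ - x‖ = ‖x - μ‖ := norm_sub_rev _ _
  rw [hmx] at htri
  have hu2 : (‖pz y - x‖ - ‖x - μ‖) ^ 2 ≤ ‖pz y - μ‖ ^ 2 := by
    nlinarith [htri, abs_nonneg (‖pz y - x‖ - ‖x - μ‖), sq_abs (‖pz y - x‖ - ‖x - μ‖)]
  nlinarith [hu2, sq_nonneg (‖pz y - x‖ - ‖x - μ‖ + (rstar - pa y) - (‖x - μ‖ - rstar)),
    sq_nonneg (‖pz y - x‖ - ‖x - μ‖ - (rstar - pa y)), sq_nonneg (‖x - μ‖ + rstar)]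

lemma Hgrad_norm_le {d : ℕ} (x : Vec d) (y : Par d) :
    ‖Hgrad x y‖ ≤ 2 * (‖pz y‖ + |pa y| + ‖x‖) := by
  have h := Hgrad_norm_sq_le x y
  have h2 : |‖pz y - x‖ - pa y| ≤ ‖pz y‖ + |pa y| + ‖x‖ := by
    have h3 : ‖pz y - x‖ ≤ ‖pz y‖ + ‖x‖ := norm_sub_le _ _
    have h4 : |‖pz y - x‖ - pa y| ≤ |‖pz y - x‖| + |pa y| := by
      rw [sub_eq_add_neg]
      simpa using abs_add_le (‖pz y - x‖) (-pa y)
    rw [abs_of_nonneg (norm_nonneg (pz y - x))] at h4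
    linarith
  nlinarith [h, h2, norm_nonneg (Hgrad x y), abs_nonneg (‖pz y - x‖ - pa y),
    sq_abs (‖pz y - x‖ - pa y), norm_nonneg (pz y), norm_nonneg x, abs_nonneg (pa y)]

lemma measurable_Hgrad_left {d : ℕ} (y : Par d) : Measurable (fun x : Vec d => Hgrad x y) :=
  (measurable_Hgrad (d := d)).of_uncurry_right


set_option maxHeartbeats 2000000 in
theorem statement15
    {Ω : Type*} [MeasurableSpace Ω] (P : Measure Ω) [IsProbabilityMeasure P]
    {d : ℕ} (hd : 2 ≤ d)
    (μ : Vec d) (r : ℝ) (hr : 0 < r)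
    (W : Ω → ℝ) (U : Ω → Vec d)
    (hWm : Measurable W) (hUm : Measurable U)
    (hWpos : ∀ ω, 0 < W ω) (hUnorm : ∀ ω, ‖U ω‖ = 1)
    (hindep : IndepFun W U P)
    (X : Ω → Vec d) (hX : ∀ ω, X ω = μ + (r * W ω) • U ω)
    (rstar : ℝ) (hrstar : rstar = r * ∫ ω, W ω ∂P)
    (hA1 : Integrable (fun ω => (‖X ω - μ‖ ^ 2)⁻¹) P)
    (hA2 : Integrable (fun ω => ‖X ω - μ‖ ^ 2) P)
    (K : Set (Par d)) (hKcomp : IsCompact K) (hKconv : Convex ℝ K)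
    (hθK : pmk μ rstar ∈ K)
    (proj : Par d → Par d)
    (hprojLip : LipschitzWith 1 proj)
    (hprojK : ∀ y ∈ K, proj y = y)
    (hprojF : ∀ y ∉ K, proj y ∈ frontier K)
    (Xs : ℕ → Ω → Vec d) (hXsm : ∀ n, Measurable (Xs n))
    (hiid : iIndepFun Xs P)
    (hid : ∀ n, IdentDistrib (Xs n) X P P)
    (γ : ℕ → ℝ) (hγpos : ∀ n, 0 < γ n)
    (θhat : ℕ → Ω → Par d) (θ₁ : Par d) (hθ₁K : θ₁ ∈ K) (hinit : ∀ ω, θhat 1 ω = θ₁)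
    (hrec : ∀ n, 1 ≤ n → ∀ ω,
      θhat (n + 1) ω = proj (θhat n ω - γ n • Hgrad (Xs (n + 1) ω) (θhat n ω)))
    (c : ℝ) (hc : 0 < c)
    (hconv : ∀ y ∈ K, ⟪Phi P X y, y - pmk μ rstar⟫ ≥ c * ‖y - pmk μ rstar‖ ^ 2)
    :
    ∀ n : ℕ, 1 ≤ n →
      ∫ ω, ‖θhat (n + 1) ω - pmk μ rstar‖ ^ 2 ∂P ≤
        (1 - 2 * c * γ n + 8 * γ n ^ 2) * ∫ ω, ‖θhat n ω - pmk μ rstar‖ ^ 2 ∂P +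
          (8 * rstar ^ 2 + 8 * r ^ 2 * ∫ ω, W ω ^ 2 ∂P) * γ n ^ 2 := by
  intro n hn
  set θv : Par d := pmk μ rstar with hθvdef
  -- bounds on K
  obtain ⟨D, hD⟩ := isBounded_iff_forall_norm_le.mp hKcomp.isBounded
  have hDpos : 0 ≤ D := le_trans (norm_nonneg _) (hD _ hθK)
  have hKd : ∀ y ∈ K, ‖y - θv‖ ≤ 2 * D := by
    intro y hy
    calc ‖y - θv‖ ≤ ‖y‖ + ‖θv‖ := norm_sub_le _ _
    _ ≤ 2 * D := by have h1 := hD y hy; have h2 := hD θv hθK; linarith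
  -- proj lands in K
  have hprojmem : ∀ y, proj y ∈ K := by
    intro y
    by_cases h : y ∈ K
    · rw [hprojK y h]; exact h
    · exact hKcomp.isClosed.frontier_subset (hprojF y h)
  -- iterates stay in K
  have hmem : ∀ m, 1 ≤ m → ∀ ω, θhat m ω ∈ K := by
    intro m hm
    induction m, hm using Nat.le_induction with
    | base => intro ω; rw [hinit ω]; exact hθ₁K
    | succ k hk ih => intro ω; rw [hrec k hk ω]; exact hprojmem _
  -- X is measurable
  have hXm : Measurable X := by
    have : X = fun ω => μ + (r * W ω) • U ω := funext hX
    rw [this]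
    exact measurable_const.add ((hWm.const_mul r).smul hUm)
  -- representation of iterates as functions of the sample
  have hrep : ∀ m, 1 ≤ m → ∃ g : ((Finset.Icc 2 m : Finset ℕ) → Vec d) → Par d,
      Measurable g ∧ ∀ ω, θhat m ω = g (fun i => Xs i ω) := by
    intro m hm
    induction m, hm using Nat.le_induction with
    | base =>
      exact ⟨fun _ => θ₁, measurable_const, fun ω => hinit ω⟩
    | succ k hk ih =>
      obtain ⟨g, hgm, hgeq⟩ := ih
      have hmem1 : (k + 1) ∈ Finset.Icc 2 (k + 1) := by
        rw [Finset.mem_Icc]; omega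
      have hsubmem : ∀ i : (Finset.Icc 2 k : Finset ℕ), (i : ℕ) ∈ Finset.Icc 2 (k + 1) := by
        intro i
        have := i.2
        rw [Finset.mem_Icc] at *
        omega
      set restr : ((Finset.Icc 2 (k+1) : Finset ℕ) → Vec d) →
          ((Finset.Icc 2 k : Finset ℕ) → Vec d) :=
        fun v i => v ⟨i.1, hsubmem i⟩ with hrestrdef
      have hrestr : Measurable restr :=
        measurable_pi_lambda _ (fun i => measurable_pi_apply _)
      refine ⟨fun v => proj (g (restr v) - γ k • Hgrad (v ⟨k+1, hmem1⟩) (g (restr v))),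
        ?_, ?_⟩
      · have h1 : Measurable fun v => g (restr v) := hgm.comp hrestr
        have h2 : Measurable fun v : ((Finset.Icc 2 (k+1) : Finset ℕ) → Vec d) =>
            v ⟨k+1, hmem1⟩ := measurable_pi_apply _
        have h3 : Measurable fun v : ((Finset.Icc 2 (k+1) : Finset ℕ) → Vec d) =>
            Hgrad (v ⟨k+1, hmem1⟩) (g (restr v)) :=
          measurable_Hgrad.comp (h2.prodMk h1)
        have h4 : Measurable fun v : ((Finset.Icc 2 (k+1) : Finset ℕ) → Vec d) =>
            γ k • Hgrad (v ⟨k+1, hmem1⟩) (g (restr v)) :=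
          (continuous_const_smul (γ k)).measurable.comp h3
        exact hprojLip.continuous.measurable.comp (h1.sub h4)
      · intro ω
        rw [hrec k hk ω, hgeq ω]
  have hθm : Measurable (θhat n) := by
    obtain ⟨g, hgm, hgeq⟩ := hrep n hn
    have : θhat n = fun ω => g (fun i => Xs i ω) := funext hgeq
    rw [this]
    exact hgm.comp (measurable_pi_lambda _ (fun i => hXsm i))
  have hθm' : Measurable (θhat (n+1)) := by
    obtain ⟨g, hgm, hgeq⟩ := hrep (n+1) (by omega)
    have : θhat (n+1) = fun ω => g (fun i => Xs i ω) := funext hgeq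
    rw [this]
    exact hgm.comp (measurable_pi_lambda _ (fun i => hXsm i))
  -- independence of θhat n and Xs (n+1)
  have hindep2 : IndepFun (θhat n) (Xs (n+1)) P := by
    have hS : Disjoint (Finset.Icc 2 n) ({n+1} : Finset ℕ) := by
      rw [Finset.disjoint_right]
      intro i hi
      rw [Finset.mem_singleton] at hi
      rw [Finset.mem_Icc]
      omega
    have hbase := hiid.indepFun_finset (Finset.Icc 2 n) {n+1} hS hXsm
    obtain ⟨g, hgm, hgeq⟩ := hrep n hn
    have hmm : (n+1) ∈ ({n+1} : Finset ℕ) := Finset.mem_singleton_self _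
    have hcomp := hbase.comp (hgm)
      (measurable_pi_apply (⟨n+1, hmm⟩ : (({n+1} : Finset ℕ) : Finset ℕ)))
    have he1 : θhat n = g ∘ (fun a (i : (Finset.Icc 2 n : Finset ℕ)) => Xs i a) :=
      funext hgeq
    rw [he1]
    exact hcomp
  -- integrability of ‖X - μ‖
  have hXint : Integrable (fun ω => ‖X ω - μ‖) P := by
    apply Integrable.mono' ((integrable_const (1:ℝ)).add hA2)
      ((hXm.sub measurable_const).norm.aestronglyMeasurable)
    filter_upwards with ω
    simp only [Pi.add_apply, Pi.sub_apply]
    rw [Real.norm_eq_abs, abs_of_nonneg (norm_nonneg _)]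
    nlinarith [norm_nonneg (X ω - μ), sq_nonneg (‖X ω - μ‖ - 1)]
  have humeas : Measurable (fun x : Vec d => ‖x - μ‖) :=
    (measurable_id.sub measurable_const).norm
  have hu2meas : Measurable (fun x : Vec d => ‖x - μ‖ ^ 2) := humeas.pow_const 2
  have hidn : IdentDistrib (Xs (n+1)) X P P := hid (n+1)
  have hXsint : Integrable (fun ω => ‖Xs (n+1) ω - μ‖) P :=
    ((hidn.comp humeas).integrable_iff).mpr hXint
  have hXs2int : Integrable (fun ω => ‖Xs (n+1) ω - μ‖ ^ 2) P :=
    ((hidn.comp hu2meas).integrable_iff).mpr hA2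
  -- E‖X-μ‖² = r² E W²
  have hXW : ∀ ω, ‖X ω - μ‖ ^ 2 = r ^ 2 * W ω ^ 2 := by
    intro ω
    rw [hX ω]
    simp only [add_sub_cancel_left, norm_smul, Real.norm_eq_abs, hUnorm ω, mul_one]
    rw [abs_of_pos (mul_pos hr (hWpos ω))]
    ring
  have hEW : ∫ ω, ‖Xs (n+1) ω - μ‖ ^ 2 ∂P = r ^ 2 * ∫ ω, W ω ^ 2 ∂P := by
    have h1 : ∫ ω, ‖Xs (n+1) ω - μ‖ ^ 2 ∂P = ∫ ω, ‖X ω - μ‖ ^ 2 ∂P :=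
      (hidn.comp hu2meas).integral_eq
    rw [h1]
    have h2 : (fun ω => ‖X ω - μ‖ ^ 2) = fun ω => r ^ 2 * W ω ^ 2 := funext hXW
    rw [h2, integral_const_mul]
  -- the measures
  set ν : Measure (Vec d) := P.map X with hνdef
  set κ : Measure (Par d) := P.map (θhat n) with hκdef
  have hνprob : IsProbabilityMeasure ν := Measure.isProbabilityMeasure_map hXm.aemeasurable
  have hκprob : IsProbabilityMeasure κ := Measure.isProbabilityMeasure_map hθm.aemeasurable
  have hνint : Integrable (fun x : Vec d => ‖x - μ‖) ν := by
    rw [hνdef, integrable_map_measure humeas.aestronglyMeasurable hXm.aemeasurable]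
    exact hXint

  -- the integrand F and partial integral G
  set F : Vec d × Par d → ℝ := fun p => ⟪Hgrad p.1 p.2, p.2 - θv⟫ with hFdef
  have hFmeas : Measurable F :=
    measurable_Hgrad.inner (measurable_snd.sub measurable_const)
  set G : Par d → ℝ := fun y => ∫ x, F (x, y) ∂ν with hGdef
  have hGsm : StronglyMeasurable G := by
    have hswap : Measurable (Function.uncurry fun (y : Par d) (x : Vec d) => F (x, y)) :=
      hFmeas.comp measurable_swap
    exact hswap.stronglyMeasurable.integral_prod_right
  have hHgint : ∀ y : Par d, Integrable (fun x : Vec d => Hgrad x y) ν := by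
    intro y
    have hmg : Measurable (fun x : Vec d => Hgrad x y) :=
      measurable_Hgrad_left y
    apply Integrable.mono'
      ((integrable_const (2 * (‖pz y‖ + |pa y| + ‖μ‖))).add (hνint.const_mul 2))
      hmg.aestronglyMeasurable
    filter_upwards with x
    simp only [Pi.add_apply]
    have h1 := Hgrad_norm_le x y
    have h2 : ‖x‖ - ‖μ‖ ≤ ‖x - μ‖ := norm_sub_norm_le x μ
    linarith
  have hGval : ∀ y : Par d, G y = ⟪Phi P X y, y - θv⟫ := by
    intro y
    have h1 : G y = ∫ x, ⟪Hgrad x y, y - θv⟫ ∂ν := rfl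
    rw [h1]
    have h2 : ∀ x : Vec d, ⟪Hgrad x y, y - θv⟫ = ⟪y - θv, Hgrad x y⟫ :=
      fun x => real_inner_comm _ _
    simp_rw [h2]
    rw [integral_inner (hHgint y) (y - θv), real_inner_comm]
    congr 1
    have hmg : Measurable (fun x : Vec d => Hgrad x y) :=
      measurable_Hgrad_left y
    rw [hνdef, integral_map hXm.aemeasurable hmg.aestronglyMeasurable]
    rfl
  -- joint law is a product law
  have hpairmeas : AEMeasurable (fun ω => (Xs (n+1) ω, θhat n ω)) P :=
    ((hXsm (n+1)).prodMk hθm).aemeasurable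
  have hpair : P.map (fun ω => (Xs (n+1) ω, θhat n ω)) = ν.prod κ := by
    have h1 := (indepFun_iff_map_prod_eq_prod_map_map (hXsm (n+1)).aemeasurable
      hθm.aemeasurable).mp hindep2.symm
    rw [h1, hidn.map_eq, ← hνdef, ← hκdef]
  -- integrability of the inner-product term
  have hFcomp_int : Integrable (fun ω => F (Xs (n+1) ω, θhat n ω)) P := by
    apply Integrable.mono'
      ((integrable_const (4*D*(2*D + ‖μ‖))).add (hXsint.const_mul (4*D)))
      ((hFmeas.comp ((hXsm (n+1)).prodMk hθm)).aestronglyMeasurable)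
    filter_upwards with ω
    simp only [Pi.add_apply]
    have hyK := hmem n hn ω
    have h1 : |F (Xs (n+1) ω, θhat n ω)|
        ≤ ‖Hgrad (Xs (n+1) ω) (θhat n ω)‖ * ‖θhat n ω - θv‖ := abs_real_inner_le_norm _ _
    have h2 := Hgrad_norm_le (Xs (n+1) ω) (θhat n ω)
    have h3 : ‖pz (θhat n ω)‖ ≤ D := le_trans (pz_norm_le _) (hD _ hyK)
    have h4 : |pa (θhat n ω)| ≤ D := le_trans (pa_abs_le _) (hD _ hyK)
    have h5 : ‖Xs (n+1) ω‖ ≤ ‖μ‖ + ‖Xs (n+1) ω - μ‖ := by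
      have := norm_sub_norm_le (Xs (n+1) ω) μ
      linarith
    have h6 := hKd _ hyK
    have h7 : ‖Hgrad (Xs (n+1) ω) (θhat n ω)‖
        ≤ 2*(2*D + ‖μ‖ + ‖Xs (n+1) ω - μ‖) := by linarith
    rw [Real.norm_eq_abs]
    calc |F (Xs (n+1) ω, θhat n ω)|
        ≤ ‖Hgrad (Xs (n+1) ω) (θhat n ω)‖ * ‖θhat n ω - θv‖ := h1
      _ ≤ (2*(2*D + ‖μ‖ + ‖Xs (n+1) ω - μ‖)) * (2*D) := by
          apply mul_le_mul h7 h6 (norm_nonneg _)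
          have := norm_nonneg (Xs (n+1) ω - μ)
          have := norm_nonneg μ
          linarith
      _ = 4*D*(2*D + ‖μ‖) + 4*D*‖Xs (n+1) ω - μ‖ := by ring
  have hFprod_int : Integrable F (ν.prod κ) := by
    rw [← hpair, integrable_map_measure hFmeas.aestronglyMeasurable hpairmeas]
    exact hFcomp_int
  -- the conditioning identity
  have hkey : ∫ ω, F (Xs (n+1) ω, θhat n ω) ∂P = ∫ ω, G (θhat n ω) ∂P := by
    have h1 : ∫ ω, F (Xs (n+1) ω, θhat n ω) ∂P = ∫ p, F p ∂(ν.prod κ) := by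
      rw [← hpair, integral_map hpairmeas hFmeas.aestronglyMeasurable]
    have h2 : ∫ p, F p ∂(ν.prod κ) = ∫ y, G y ∂κ := integral_prod_symm F hFprod_int
    have h3 : ∫ y, G y ∂κ = ∫ ω, G (θhat n ω) ∂P := by
      rw [hκdef, integral_map hθm.aemeasurable hGsm.aestronglyMeasurable]
    rw [h1, h2, h3]
  -- bound for G on K and integrability
  set I : ℝ := ∫ ω, ‖X ω - μ‖ ∂P with hIdef
  have hI0 : 0 ≤ I := integral_nonneg fun ω => norm_nonneg _
  have hPhile : ∀ y ∈ K, ‖Phi P X y‖ ≤ 4*D + 2*‖μ‖ + 2*I := by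
    intro y hy
    have h3 : ‖pz y‖ ≤ D := le_trans (pz_norm_le _) (hD _ hy)
    have h4 : |pa y| ≤ D := le_trans (pa_abs_le _) (hD _ hy)
    have h1 : ‖Phi P X y‖ ≤ ∫ ω, ‖Hgrad (X ω) y‖ ∂P := norm_integral_le_integral_norm _
    have h2 : ∫ ω, ‖Hgrad (X ω) y‖ ∂P ≤ ∫ ω, (4*D + 2*‖μ‖ + 2*‖X ω - μ‖) ∂P := by
      apply integral_mono_of_nonneg (ae_of_all _ fun ω => norm_nonneg _)
        ((integrable_const (4*D + 2*‖μ‖)).add (hXint.const_mul 2))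
      apply ae_of_all _ fun ω => ?_
      have h5 := Hgrad_norm_le (X ω) y
      have h6 : ‖X ω‖ - ‖μ‖ ≤ ‖X ω - μ‖ := norm_sub_norm_le (X ω) μ
      simp only [Pi.add_apply]
      linarith
    have h6 : ∫ ω, (4*D + 2*‖μ‖ + 2*‖X ω - μ‖) ∂P = 4*D + 2*‖μ‖ + 2*I := by
      rw [integral_add (integrable_const _) (hXint.const_mul 2), integral_const,
        integral_const_mul, hIdef]
      simp [measure_univ]
    linarith
  have hGbound : ∀ y ∈ K, |G y| ≤ (4*D + 2*‖μ‖ + 2*I) * (2*D) := by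
    intro y hy
    rw [hGval y]
    calc |⟪Phi P X y, y - θv⟫| ≤ ‖Phi P X y‖ * ‖y - θv‖ := abs_real_inner_le_norm _ _
      _ ≤ (4*D + 2*‖μ‖ + 2*I) * (2*D) := by
          apply mul_le_mul (hPhile y hy) (hKd y hy) (norm_nonneg _)
          have := norm_nonneg μ
          linarith
  have hGint : Integrable (fun ω => G (θhat n ω)) P := by
    apply Integrable.mono' (integrable_const ((4*D + 2*‖μ‖ + 2*I) * (2*D)))
      ((hGsm.measurable.comp hθm).aestronglyMeasurable)
    filter_upwards with ω
    rw [Real.norm_eq_abs]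
    exact hGbound _ (hmem n hn ω)
  have hI2 : Integrable (fun ω => ‖θhat n ω - θv‖ ^ 2) P := by
    apply Integrable.mono' (integrable_const ((2*D)^2))
      (((hθm.sub measurable_const).norm.pow_const 2).aestronglyMeasurable)
    filter_upwards with ω
    change ‖‖θhat n ω - θv‖ ^ 2‖ ≤ _
    rw [Real.norm_eq_abs, abs_of_nonneg (by positivity)]
    have h1 := hKd _ (hmem n hn ω)
    nlinarith [norm_nonneg (θhat n ω - θv)]
  have hI1 : Integrable (fun ω => ‖θhat (n+1) ω - θv‖ ^ 2) P := by
    apply Integrable.mono' (integrable_const ((2*D)^2))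
      (((hθm'.sub measurable_const).norm.pow_const 2).aestronglyMeasurable)
    filter_upwards with ω
    change ‖‖θhat (n+1) ω - θv‖ ^ 2‖ ≤ _
    rw [Real.norm_eq_abs, abs_of_nonneg (by positivity)]
    have h1 := hKd _ (hmem (n+1) (by omega) ω)
    nlinarith [norm_nonneg (θhat (n+1) ω - θv)]
  have hconv2 : c * ∫ ω, ‖θhat n ω - θv‖ ^ 2 ∂P ≤ ∫ ω, G (θhat n ω) ∂P := by
    rw [← integral_const_mul]
    apply integral_mono (hI2.const_mul c) hGint
    intro ω
    show c * ‖θhat n ω - θv‖ ^ 2 ≤ G (θhat n ω)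
    rw [hGval (θhat n ω)]
    exact hconv _ (hmem n hn ω)
  -- pointwise recursion inequality
  have hprojθv : proj θv = θv := hprojK _ hθK
  have hpt : ∀ ω, ‖θhat (n+1) ω - θv‖ ^ 2 ≤ ‖θhat n ω - θv‖ ^ 2
      - 2 * γ n * F (Xs (n+1) ω, θhat n ω)
      + γ n ^ 2 * (8 * ‖θhat n ω - θv‖ ^ 2 + 8 * rstar ^ 2 + 8 * ‖Xs (n+1) ω - μ‖ ^ 2) := by
    intro ω
    set H := Hgrad (Xs (n+1) ω) (θhat n ω) with hHdef
    have h1 : ‖θhat (n+1) ω - θv‖ ≤ ‖(θhat n ω - θv) - γ n • H‖ := by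
      rw [hrec n hn ω]
      calc ‖proj (θhat n ω - γ n • H) - θv‖
          = dist (proj (θhat n ω - γ n • H)) (proj θv) := by rw [hprojθv, dist_eq_norm]
        _ ≤ dist (θhat n ω - γ n • H) θv := by
            simpa using hprojLip.dist_le_mul (θhat n ω - γ n • H) θv
        _ = ‖(θhat n ω - θv) - γ n • H‖ := by rw [dist_eq_norm, sub_right_comm]
    have h2 : ‖(θhat n ω - θv) - γ n • H‖ ^ 2 = ‖θhat n ω - θv‖ ^ 2
        - 2 * (γ n * ⟪H, θhat n ω - θv⟫) + γ n ^ 2 * ‖H‖ ^ 2 := by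
      rw [norm_sub_sq_real, real_inner_smul_right, real_inner_comm, norm_smul,
        Real.norm_eq_abs, mul_pow, sq_abs]
    have h3 := Hgrad_bound (Xs (n+1) ω) (θhat n ω) μ rstar
    rw [← hθvdef] at h3
    rw [← hHdef] at h3
    have h4 : ‖θhat (n+1) ω - θv‖ ^ 2 ≤ ‖(θhat n ω - θv) - γ n • H‖ ^ 2 :=
      pow_le_pow_left₀ (norm_nonneg _) h1 2
    have h5 : F (Xs (n+1) ω, θhat n ω) = ⟪H, θhat n ω - θv⟫ := rfl
    rw [h5]
    nlinarith [h4, h2, h3, sq_nonneg (γ n)]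
  -- assemble
  have iB : Integrable (fun ω => 2 * γ n * F (Xs (n+1) ω, θhat n ω)) P :=
    hFcomp_int.const_mul (2 * γ n)
  have iA : Integrable (fun ω => ‖θhat n ω - θv‖ ^ 2
      - 2 * γ n * F (Xs (n+1) ω, θhat n ω)) P := hI2.sub iB
  have iD : Integrable (fun ω => 8 * ‖θhat n ω - θv‖ ^ 2) P := hI2.const_mul 8
  have iE : Integrable (fun ω => (8:ℝ) * rstar ^ 2) P := integrable_const _
  have iDE : Integrable (fun ω => 8 * ‖θhat n ω - θv‖ ^ 2 + 8 * rstar ^ 2) P := iD.add iE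
  have iF : Integrable (fun ω => 8 * ‖Xs (n+1) ω - μ‖ ^ 2) P := hXs2int.const_mul 8
  have iDEF : Integrable (fun ω => 8 * ‖θhat n ω - θv‖ ^ 2 + 8 * rstar ^ 2
      + 8 * ‖Xs (n+1) ω - μ‖ ^ 2) P := iDE.add iF
  have iC : Integrable (fun ω => γ n ^ 2 * (8 * ‖θhat n ω - θv‖ ^ 2 + 8 * rstar ^ 2
      + 8 * ‖Xs (n+1) ω - μ‖ ^ 2)) P := iDEF.const_mul (γ n ^ 2)
  have iAC : Integrable (fun ω => ‖θhat n ω - θv‖ ^ 2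
      - 2 * γ n * F (Xs (n+1) ω, θhat n ω)
      + γ n ^ 2 * (8 * ‖θhat n ω - θv‖ ^ 2 + 8 * rstar ^ 2
        + 8 * ‖Xs (n+1) ω - μ‖ ^ 2)) P := iA.add iC
  have hSc : c * ∫ ω, ‖θhat n ω - θv‖ ^ 2 ∂P ≤ ∫ ω, F (Xs (n+1) ω, θhat n ω) ∂P := by
    rw [hkey]
    exact hconv2
  have h8 : ∫ ω, (8 * ‖θhat n ω - θv‖ ^ 2 + 8 * rstar ^ 2
      + 8 * ‖Xs (n+1) ω - μ‖ ^ 2) ∂P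
      = 8 * (∫ ω, ‖θhat n ω - θv‖ ^ 2 ∂P) + 8 * rstar ^ 2
        + 8 * (r ^ 2 * ∫ ω, W ω ^ 2 ∂P) := by
    rw [integral_add iDE iF, integral_add iD iE, integral_const_mul, integral_const_mul,
      integral_const_mul, hEW, integral_const]
    simp [measure_univ]
  have hsplit : ∫ ω, (‖θhat n ω - θv‖ ^ 2 - 2 * γ n * F (Xs (n+1) ω, θhat n ω)
      + γ n ^ 2 * (8 * ‖θhat n ω - θv‖ ^ 2 + 8 * rstar ^ 2
        + 8 * ‖Xs (n+1) ω - μ‖ ^ 2)) ∂P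
      = (∫ ω, ‖θhat n ω - θv‖ ^ 2 ∂P)
        - 2 * γ n * (∫ ω, F (Xs (n+1) ω, θhat n ω) ∂P)
        + γ n ^ 2 * (8 * (∫ ω, ‖θhat n ω - θv‖ ^ 2 ∂P) + 8 * rstar ^ 2
          + 8 * (r ^ 2 * ∫ ω, W ω ^ 2 ∂P)) := by
    rw [integral_add iA iC, integral_sub hI2 iB, integral_const_mul, integral_const_mul, h8]
  have hfinal : ∫ ω, ‖θhat (n+1) ω - θv‖ ^ 2 ∂P
      ≤ (∫ ω, ‖θhat n ω - θv‖ ^ 2 ∂P)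
        - 2 * γ n * (∫ ω, F (Xs (n+1) ω, θhat n ω) ∂P)
        + γ n ^ 2 * (8 * (∫ ω, ‖θhat n ω - θv‖ ^ 2 ∂P) + 8 * rstar ^ 2
          + 8 * (r ^ 2 * ∫ ω, W ω ^ 2 ∂P)) := by
    rw [← hsplit]
    exact integral_mono hI1 iAC hpt
  have hEnn : (0:ℝ) ≤ ∫ ω, ‖θhat n ω - θv‖ ^ 2 ∂P :=
    integral_nonneg fun ω => by positivity
  have hmul : γ n * (c * ∫ ω, ‖θhat n ω - θv‖ ^ 2 ∂P)
      ≤ γ n * ∫ ω, F (Xs (n+1) ω, θhat n ω) ∂P :=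
    mul_le_mul_of_nonneg_left hSc (le_of_lt (hγpos n))
  nlinarith [hfinal, hmul, hγpos n]


end
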